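/- Let E be the row-finite graph with vertex set E⁰ = {a} ∪ {pₙ : n ∈ ℕ} and, for each n ∈ ℕ, exactly one edge from pₙ to pₙ₊₁ and one edge from pₙ to a (the vertex a emits no edges); thus M_E is the abelian monoid with generators a, p₀, p₁, … and relations pₙ = pₙ₊₁ + a for all n ≥ 0. Then M_E is not primely generated; indeed, the only prime element of M_E is the class of a (together with 0). -/

import Mathlib

/-- A row-finite directed graph: vertex set `V`, edge set `Edge`,
source and range maps, with every vertex emitting finitely many edges. -/
structure RFGraph where
  V : Type
  Edge : Type
  s : Edge → V
  r : Edge → V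
  rowFinite : ∀ v : V, {e : Edge | s e = v}.Finite

namespace RFGraph

/-- The free abelian monoid on the vertex set. -/
abbrev F (G : RFGraph) : Type := G.V →₀ ℕ

/-- `v` emits at least one edge. -/
def emits (G : RFGraph) (v : G.V) : Prop := ∃ e : G.Edge, G.s e = v

/-- `𝐫(v) = Σ_{e ∈ s⁻¹(v)} r(e)` in the free abelian monoid. -/
noncomputable def rr (G : RFGraph) (v : G.V) : G.F :=
  ∑ e ∈ (G.rowFinite v).toFinset, Finsupp.single (G.r e) 1

/-- The one-step relation `→₁`: `α →₁ β` iff `α = x + α'` for a vertex `x`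
emitting at least one edge, and `β = 𝐫(x) + α'`. -/
def step (G : RFGraph) (α β : G.F) : Prop :=
  ∃ (x : G.V) (α' : G.F), G.emits x ∧ α = Finsupp.single x 1 + α' ∧ β = G.rr x + α'

/-- The reflexive-transitive closure `→` of `→₁`. -/
def steps (G : RFGraph) : G.F → G.F → Prop := Relation.ReflTransGen G.step

/-- The additive congruence `∼` on `F_E` generated by `→₁`. -/
noncomputable def graphCon (G : RFGraph) : AddCon G.F := addConGen G.step

/-- The graph monoid `M_E = F_E/∼`. -/
abbrev M (G : RFGraph) : Type := G.graphCon.Quotient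

/-- The class `a_v` of a vertex `v` in the graph monoid. -/
noncomputable def av (G : RFGraph) (v : G.V) : G.M := G.graphCon.mk' (Finsupp.single v 1)

end RFGraph

namespace RFGraph

/-- The algebraic pre-order on the graph monoid: `x ≤ y` iff `∃ z, y = x + z`. -/
def mle (G : RFGraph) (x y : G.M) : Prop := ∃ z : G.M, y = x + z

/-- A prime element of the graph monoid. -/
def IsPrime (G : RFGraph) (p : G.M) : Prop :=
  ∀ a₁ a₂ : G.M, G.mle p (a₁ + a₂) → G.mle p a₁ ∨ G.mle p a₂

end RFGraph

/-- The graph with vertices `a` (= `none`) and `pₙ` (= `some n`), where for each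
`n` there is exactly one edge `pₙ → pₙ₊₁` (the edge `(n, true)`) and exactly one
edge `pₙ → a` (the edge `(n, false)`), and `a` emits no edges. -/
def exGraph : RFGraph where
  V := Option ℕ
  Edge := ℕ × Bool
  s := fun e => some e.1
  r := fun e => if e.2 then some (e.1 + 1) else none
  rowFinite := fun v => by
    match v with
    | none =>
        convert Set.finite_empty
        ext e
        simp [Set.mem_setOf_eq]
    | some n =>
        apply Set.Finite.subset (s := {(n, true), (n, false)})
          (Set.toFinite _)
        rintro ⟨m, b⟩ hm
        simp only [Set.mem_setOf_eq, Option.some.injEq] at hm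
        cases b <;> simp [hm]

-- auxiliary development
section Aux
open Finsupp

lemma exGraph_emits_some (n : ℕ) : exGraph.emits (some n) := ⟨(n, true), rfl⟩

lemma exGraph_emits_iff {v : Option ℕ} (h : exGraph.emits v) : ∃ n, v = some n := by
  obtain ⟨e, he⟩ := h
  exact ⟨e.1, he.symm⟩

lemma exGraph_toFinset_eq (n : ℕ) :
    (exGraph.rowFinite (some n)).toFinset = ({(n, true), (n, false)} : Finset (ℕ × Bool)) := by
  ext e
  obtain ⟨m, b⟩ := e
  erw [Set.Finite.mem_toFinset, Finset.mem_insert (s := ({(n, false)} : Finset (ℕ × Bool))),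
    Finset.mem_singleton]
  show some m = some n ↔ (m, b) = (n, true) ∨ (m, b) = (n, false)
  constructor
  · intro h
    rw [Option.some_inj] at h
    subst h
    cases b
    · exact Or.inr rfl
    · exact Or.inl rfl
  · rintro (h | h) <;> rw [show m = n from congrArg Prod.fst h]

lemma exGraph_rr_some (n : ℕ) :
    exGraph.rr (some n) =
      Finsupp.single (Option.some (n + 1)) 1 + Finsupp.single (none : Option ℕ) 1 := by
  have hne : ((n, true) : ℕ × Bool) ≠ (n, false) := by simp
  have key : (∑ e ∈ ({(n, true), (n, false)} : Finset (ℕ × Bool)),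
      (Finsupp.single (exGraph.r e) 1 : Option ℕ →₀ ℕ)) =
      Finsupp.single (Option.some (n + 1)) 1 + Finsupp.single none 1 := by
    rw [Finset.sum_pair hne]
    rfl
  erw [RFGraph.rr, exGraph_toFinset_eq]
  exact key

end Aux

section Homs
open Finsupp

/-- `k ↦ c * k` as an additive hom `ℕ →+ ℤ`. -/
def natScale (c : ℤ) : ℕ →+ ℤ where
  toFun k := c * k
  map_zero' := by simp
  map_add' a b := by push_cast; ring

/-- Count of `p`-generators. -/
noncomputable def psi : exGraph.F →+ ℕ :=
  Finsupp.liftAddHom fun v => Option.casesOn v 0 fun _ => AddMonoidHom.id ℕ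

/-- `a ↦ 1`, `pₙ ↦ -n`. -/
noncomputable def delta : exGraph.F →+ ℤ :=
  Finsupp.liftAddHom fun v => Option.casesOn v (natScale 1) fun n => natScale (-(n : ℤ))

@[simp] lemma psi_single_none (k : ℕ) : psi (Finsupp.single (none : Option ℕ) k) = 0 := by
  erw [psi, Finsupp.liftAddHom_apply_single]; rfl

@[simp] lemma psi_single_some (n k : ℕ) : psi (Finsupp.single (Option.some n) k) = k := by
  erw [psi, Finsupp.liftAddHom_apply_single]; rfl

@[simp] lemma delta_single_none (k : ℕ) :
    delta (Finsupp.single (none : Option ℕ) k) = k := by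
  erw [delta, Finsupp.liftAddHom_apply_single]
  show (1 : ℤ) * k = k
  ring

@[simp] lemma delta_single_some (n k : ℕ) :
    delta (Finsupp.single (Option.some n) k) = -(n : ℤ) * k := by
  erw [delta, Finsupp.liftAddHom_apply_single]; rfl

lemma psi_eq_zero {γ : exGraph.F} (h : psi γ = 0) :
    γ = Finsupp.single (none : Option ℕ) (γ none) := by
  have hsome : ∀ m : ℕ, γ (Option.some m) = 0 := by
    intro m
    by_contra hm
    have hmem : Option.some m ∈ γ.support := Finsupp.mem_support_iff.mpr hm
    have : psi γ = ∑ v ∈ γ.support, (Option.casesOn v 0 fun _ => AddMonoidHom.id ℕ : ℕ →+ ℕ) (γ v) := rfl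
    rw [this] at h
    have := (Finset.sum_eq_zero_iff.mp h) _ hmem
    exact hm this
  ext v
  match v with
  | none => erw [Finsupp.single_eq_same]
  | Option.some m => simp [hsome m]; exact (Finsupp.single_eq_of_ne' (Option.some_ne_none m).symm).symm

lemma step_psi {α β : exGraph.F} (h : exGraph.step α β) : psi α = psi β := by
  obtain ⟨x, α', hx, ha, hb⟩ := h
  obtain ⟨n, rfl⟩ := exGraph_emits_iff hx
  subst ha hb
  rw [exGraph_rr_some]
  erw [map_add, map_add, map_add]
  erw [psi_single_some, psi_single_some, psi_single_none]

lemma step_delta {α β : exGraph.F} (h : exGraph.step α β) : delta α = delta β := by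
  obtain ⟨x, α', hx, ha, hb⟩ := h
  obtain ⟨n, rfl⟩ := exGraph_emits_iff hx
  subst ha hb
  rw [exGraph_rr_some]
  erw [map_add, map_add, map_add]
  erw [delta_single_some, delta_single_some, delta_single_none]
  push_cast
  ring

/-- `psi` descends to the graph monoid. -/
noncomputable def Psi : exGraph.M →+ ℕ :=
  exGraph.graphCon.lift psi (by
    rw [RFGraph.graphCon]
    exact AddCon.addConGen_le.mpr fun α β h => (step_psi h : (AddCon.ker psi) α β))

/-- `delta` descends to the graph monoid. -/
noncomputable def Delta : exGraph.M →+ ℤ :=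
  exGraph.graphCon.lift delta (by
    rw [RFGraph.graphCon]
    exact AddCon.addConGen_le.mpr fun α β h => (step_delta h : (AddCon.ker delta) α β))

@[simp] lemma Psi_mk (γ : exGraph.F) : Psi (exGraph.graphCon.mk' γ) = psi γ :=
  AddCon.lift_mk' _ _

@[simp] lemma Delta_mk (γ : exGraph.F) : Delta (exGraph.graphCon.mk' γ) = delta γ :=
  AddCon.lift_mk' _ _

end Homs

section MonoidLemmas
open Finsupp

lemma graphCon_of_step {α β : exGraph.F} (h : exGraph.step α β) :
    exGraph.graphCon α β :=
  AddConGen.Rel.of _ _ h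

/-- The fundamental relation in the quotient. -/
lemma mk_rel (n : ℕ) (β : exGraph.F) :
    exGraph.graphCon.mk' ((Finsupp.single (Option.some n) 1 : exGraph.F) + β) =
      exGraph.graphCon.mk'
        ((Finsupp.single (Option.some (n + 1)) 1 : exGraph.F) + (Finsupp.single (none : Option ℕ) 1 : exGraph.F) + β) := by
  have hstep : exGraph.step ((Finsupp.single (Option.some n) 1 : exGraph.F) + β)
      ((Finsupp.single (Option.some (n + 1)) 1 : exGraph.F) + (Finsupp.single (none : Option ℕ) 1 : exGraph.F) + β) :=
    ⟨Option.some n, β, exGraph_emits_some n, rfl, by rw [exGraph_rr_some]; rfl⟩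
  exact (AddCon.eq _).mpr (graphCon_of_step hstep)

lemma mk'_eq_zero {γ : exGraph.F} (h : exGraph.graphCon.mk' γ = 0) : γ = 0 := by
  have h0 : (0 : exGraph.M) = exGraph.graphCon.mk' 0 := rfl
  have hψ : psi γ = 0 := by
    have := congrArg Psi h
    rw [Psi_mk, h0, Psi_mk] at this
    simpa using this
  have hγ := psi_eq_zero hψ
  have hδ : delta γ = 0 := by
    have := congrArg Delta h
    rw [Delta_mk, h0, Delta_mk] at this
    simpa using this
  rw [hγ] at hδ
  erw [delta_single_none] at hδ
  have : γ none = 0 := by exact_mod_cast hδ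
  erw [hγ, this, Finsupp.single_zero]; rfl

/-- Decompose a finsupp with a nonzero coefficient. -/
lemma decomp {γ : exGraph.F} {v : exGraph.V} (h : γ v ≠ 0) :
    γ = (Finsupp.single v 1 : exGraph.F) + (γ - (Finsupp.single v 1 : exGraph.F)) := by
  ext w
  rcases eq_or_ne w v with rfl | hw
  · rw [Finsupp.add_apply, Finsupp.tsub_apply, Finsupp.single_eq_same]
    omega
  · rw [Finsupp.add_apply, Finsupp.tsub_apply, Finsupp.single_eq_of_ne' (Ne.symm hw)]
    omega

lemma psi_le_of_mle {x y : exGraph.M} (h : exGraph.mle x y) : Psi x ≤ Psi y := by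
  obtain ⟨z, hz⟩ := h
  rw [hz, map_add]
  exact Nat.le_add_right _ _

lemma delta_le_of_mle {γ η : exGraph.F} (hψ : psi γ = psi η)
    (h : exGraph.mle (exGraph.graphCon.mk' γ) (exGraph.graphCon.mk' η)) :
    delta γ ≤ delta η := by
  obtain ⟨z, hz⟩ := h
  obtain ⟨ζ, rfl⟩ := AddCon.mk'_surjective z
  have hΨ := congrArg Psi hz
  rw [Psi_mk, ← map_add, Psi_mk] at hΨ
  rw [map_add] at hΨ
  have hζψ : psi ζ = 0 := by omega
  have hζ := psi_eq_zero hζψ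
  have hζδ : (0 : ℤ) ≤ delta ζ := by
    erw [hζ, delta_single_none]
    exact Int.ofNat_nonneg _
  have hΔ := congrArg Delta hz
  rw [Delta_mk, ← map_add, Delta_mk, map_add] at hΔ
  omega

lemma a_le_of_ne_zero {x : exGraph.M} (h : x ≠ 0) : exGraph.mle (exGraph.av none) x := by
  obtain ⟨γ, rfl⟩ := AddCon.mk'_surjective x
  have hγ : γ ≠ 0 := fun h0 => h (by rw [h0]; rfl)
  obtain ⟨v, hv⟩ := Finsupp.ne_iff.mp hγ
  rw [Finsupp.coe_zero, Pi.zero_apply] at hv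
  obtain ⟨β, hdec⟩ : ∃ β : exGraph.F, γ = (Finsupp.single v 1 : exGraph.F) + β :=
    ⟨_, decomp hv⟩
  cases v with
  | none =>
      exact ⟨exGraph.graphCon.mk' β, by rw [hdec, map_add]; rfl⟩
  | some n =>
      refine ⟨exGraph.graphCon.mk'
        ((Finsupp.single (Option.some (n + 1)) 1 : exGraph.F) + β), ?_⟩
      rw [hdec, mk_rel n _]
      rw [add_comm (Finsupp.single (Option.some (n + 1)) 1 : exGraph.F)
        (Finsupp.single (none : Option ℕ) 1 : exGraph.F), add_assoc]
      rw [map_add]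
      rfl

end MonoidLemmas

section Prime
open Finsupp

lemma exists_some_of_psi_ne {γ : exGraph.F} (h : psi γ ≠ 0) :
    ∃ n : ℕ, γ (Option.some n) ≠ 0 := by
  by_contra hall
  push_neg at hall
  apply h
  have hγ : γ = Finsupp.single (none : Option ℕ) (γ none) := by
    ext v
    match v with
    | none => erw [Finsupp.single_eq_same]
    | Option.some m => simp [hall m]; exact (Finsupp.single_eq_of_ne' (Option.some_ne_none m).symm).symm
  erw [hγ, psi_single_none]

lemma prime_iff (p : exGraph.M) :
    exGraph.IsPrime p ↔ p = 0 ∨ p = exGraph.av none := by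
  constructor
  · intro hp
    obtain ⟨γ, rfl⟩ := AddCon.mk'_surjective p
    by_cases hψ : psi γ = 0
    · obtain ⟨k, hk⟩ : ∃ k, γ none = k := ⟨_, rfl⟩
      have hγ := psi_eq_zero hψ
      rw [hk] at hγ
      rcases Nat.lt_or_ge k 2 with h2 | h2
      · interval_cases k
        · left
          erw [hγ, Finsupp.single_zero, map_zero]
        · right
          rw [hγ]
          rfl
      · exfalso
        have hsplit : (Finsupp.single (none : Option ℕ) k : exGraph.F) =
            (Finsupp.single (none : Option ℕ) 1 : exGraph.F) +
            (Finsupp.single (none : Option ℕ) (k - 1) : exGraph.F) := by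
          erw [← Finsupp.single_add]
          congr 1
          omega
        have hpeq : exGraph.graphCon.mk' γ =
            exGraph.graphCon.mk' (Finsupp.single (none : Option ℕ) 1) +
            exGraph.graphCon.mk' (Finsupp.single (none : Option ℕ) (k - 1)) := by
          erw [← map_add, ← hsplit, ← hγ]
        rcases hp (exGraph.graphCon.mk' (Finsupp.single (none : Option ℕ) 1))
            (exGraph.graphCon.mk' (Finsupp.single (none : Option ℕ) (k - 1)))
            ⟨0, by rw [add_zero]; exact hpeq.symm⟩ with hle | hle
        · have hψeq : psi γ = psi (Finsupp.single (none : Option ℕ) 1) := by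
            rw [hψ, psi_single_none]
          have hd := delta_le_of_mle hψeq hle
          erw [hγ, delta_single_none, delta_single_none] at hd
          omega
        · have hψeq : psi γ = psi (Finsupp.single (none : Option ℕ) (k - 1)) := by
            rw [hψ, psi_single_none]
          have hd := delta_le_of_mle hψeq hle
          erw [hγ, delta_single_none, delta_single_none] at hd
          omega
    · exfalso
      obtain ⟨n, hn⟩ := exists_some_of_psi_ne hψ
      obtain ⟨β, hdec⟩ : ∃ β : exGraph.F,
          γ = (Finsupp.single (Option.some n) 1 : exGraph.F) + β := ⟨_, decomp hn⟩
      have hpeq : exGraph.graphCon.mk' γ =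
          exGraph.graphCon.mk' ((Finsupp.single (Option.some (n + 1)) 1 : exGraph.F) + β) +
          exGraph.graphCon.mk' (Finsupp.single (none : Option ℕ) 1) := by
        rw [hdec, mk_rel n β, ← map_add]
        congr 1
        abel
      rcases hp (exGraph.graphCon.mk'
            ((Finsupp.single (Option.some (n + 1)) 1 : exGraph.F) + β))
          (exGraph.graphCon.mk' (Finsupp.single (none : Option ℕ) 1))
          ⟨0, by rw [add_zero]; exact hpeq.symm⟩ with hle | hle
      · have hψeq : psi γ =
            psi ((Finsupp.single (Option.some (n + 1)) 1 : exGraph.F) + β) := by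
          rw [hdec, map_add, map_add]
          erw [psi_single_some, psi_single_some]
        have hd := delta_le_of_mle hψeq hle
        rw [hdec, map_add, map_add] at hd
        erw [delta_single_some, delta_single_some] at hd
        push_cast at hd
        omega
      · have hle' := psi_le_of_mle hle
        rw [Psi_mk, Psi_mk, psi_single_none] at hle'
        omega
  · rintro (rfl | rfl)
    · intro a₁ a₂ _
      exact Or.inl ⟨a₁, (zero_add _).symm⟩
    · intro a₁ a₂ hle
      by_cases h₁ : a₁ = 0
      · by_cases h₂ : a₂ = 0
        · exfalso
          subst h₁ h₂
          obtain ⟨z, hz⟩ := hle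
          obtain ⟨ζ, rfl⟩ := AddCon.mk'_surjective z
          have haz : exGraph.av none + exGraph.graphCon.mk' ζ = 0 := by
            rw [← hz, add_zero]
          have hz' : exGraph.graphCon.mk'
              ((Finsupp.single (none : Option ℕ) 1 : exGraph.F) + ζ) = 0 := by
            rw [map_add]
            exact haz
          have h0 := mk'_eq_zero hz'
          have h1 : (Finsupp.single (none : Option ℕ) 1 : exGraph.F) = 0 :=
            (add_eq_zero.mp h0).1
          exact one_ne_zero (Finsupp.single_eq_zero.mp h1)
        · exact Or.inr (a_le_of_ne_zero h₂)
      · exact Or.inl (a_le_of_ne_zero h₁)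

end Prime


/-- The monoid of `exGraph` (generators `a, p₀, p₁, …`, relations
`pₙ = pₙ₊₁ + a`) is not primely generated; its only prime elements are `0` and
the class of `a`. -/
theorem stmt16 :
    (¬ ∀ x : exGraph.M, ∃ l : Multiset exGraph.M,
        (∀ p ∈ l, exGraph.IsPrime p) ∧ l.sum = x) ∧
    (∀ p : exGraph.M, exGraph.IsPrime p ↔ p = 0 ∨ p = exGraph.av none) := by
  constructor
  · intro hall
    obtain ⟨l, hl, hsum⟩ := hall (exGraph.av (Option.some 0))
    have h0 : Psi l.sum = 0 := by
      rw [map_multiset_sum]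
      apply Multiset.sum_eq_zero
      intro x hx
      obtain ⟨p, hp, rfl⟩ := Multiset.mem_map.mp hx
      rcases (prime_iff p).mp (hl p hp) with rfl | rfl
      · simp
      · erw [RFGraph.av, Psi_mk]
        erw [psi_single_none]
    rw [hsum] at h0
    have h1 : Psi (exGraph.av (Option.some 0)) = 1 := by
      erw [RFGraph.av, Psi_mk]
      erw [psi_single_some]
    omega
  · exact prime_iff
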